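/- SI_min, defined by SI_min(S;Y,Z) = Σ_s P(s) min{I(S=s;Y), I(S=s;Z)}, is superadditive: if (S1,Y1,Z1) is independent of (S2,Y2,Z2), then SI_min(S1S2; Y1Y2, Z1Z2) ≥ SI_min(S1;Y1,Z1) + SI_min(S2;Y2,Z2). -/

import Mathlib

open scoped BigOperators

/-- A probability distribution on a finite type. -/
def IsProbDist {A : Type} [Fintype A] (p : A → ℝ) : Prop :=
  (∀ x, 0 ≤ p x) ∧ ∑ x, p x = 1

/-- Shannon mutual information `I(A;B)` of a joint distribution on `A × B`. -/
noncomputable def mi2 {A B : Type} [Fintype A] [Fintype B] (p : A × B → ℝ) : ℝ :=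
  ∑ a, ∑ b, p (a, b) * Real.log (p (a, b) / ((∑ b', p (a, b')) * (∑ a', p (a', b))))

/-- Conditional mutual information `I(A;B|C)` of a joint distribution on `A × B × C`. -/
noncomputable def cmi3 {A B C : Type} [Fintype A] [Fintype B] [Fintype C]
    (p : A × B × C → ℝ) : ℝ :=
  ∑ a, ∑ b, ∑ c, p (a, b, c) *
    Real.log ((p (a, b, c) * (∑ a', ∑ b', p (a', b', c))) /
      ((∑ b', p (a, b', c)) * (∑ a', p (a', b, c))))

/-- Marginal distribution of `(S,Y)`. -/
noncomputable def margSY {S Y Z : Type} [Fintype S] [Fintype Y] [Fintype Z]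
    (p : S × Y × Z → ℝ) : S × Y → ℝ := fun x => ∑ z, p (x.1, x.2, z)

/-- Marginal distribution of `(S,Z)`. -/
noncomputable def margSZ {S Y Z : Type} [Fintype S] [Fintype Y] [Fintype Z]
    (p : S × Y × Z → ℝ) : S × Z → ℝ := fun x => ∑ y, p (x.1, y, x.2)

/-- `I(S;Y)`. -/
noncomputable def ISY {S Y Z : Type} [Fintype S] [Fintype Y] [Fintype Z]
    (p : S × Y × Z → ℝ) : ℝ := mi2 (margSY p)

/-- `I(S;Z)`. -/
noncomputable def ISZ {S Y Z : Type} [Fintype S] [Fintype Y] [Fintype Z]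
    (p : S × Y × Z → ℝ) : ℝ := mi2 (margSZ p)

/-- `I(S;YZ)`, the mutual information of `S` with the pair `(Y,Z)`. -/
noncomputable def ISYZ {S Y Z : Type} [Fintype S] [Fintype Y] [Fintype Z]
    (p : S × Y × Z → ℝ) : ℝ := mi2 p

/-- `I(S;Y|Z)`. -/
noncomputable def ISYgZ {S Y Z : Type} [Fintype S] [Fintype Y] [Fintype Z]
    (p : S × Y × Z → ℝ) : ℝ := cmi3 p

/-- The same joint distribution, with the roles of `Y` and `Z` exchanged. -/
def swapYZ {S Y Z : Type} (p : S × Y × Z → ℝ) : S × Z × Y → ℝ :=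
  fun x => p (x.1, x.2.2, x.2.1)

/-- `I(S;Z|Y)`. -/
noncomputable def ISZgY {S Y Z : Type} [Fintype S] [Fintype Y] [Fintype Z]
    (p : S × Y × Z → ℝ) : ℝ := ISYgZ (swapYZ p)

/-- The joint distribution of two independent triples, grouped componentwise. -/
def prodDist {S1 Y1 Z1 S2 Y2 Z2 : Type}
    (p1 : S1 × Y1 × Z1 → ℝ) (p2 : S2 × Y2 × Z2 → ℝ) :
    (S1 × S2) × (Y1 × Y2) × (Z1 × Z2) → ℝ :=
  fun x => p1 (x.1.1, x.2.1.1, x.2.2.1) * p2 (x.1.2, x.2.1.2, x.2.2.2)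

/-- The specific information `I(S = s; Y) = ∑_y P(y|s) log (P(s|y)/P(s))`. -/
noncomputable def specInfo {S Y : Type} [Fintype S] [Fintype Y]
    (p : S × Y → ℝ) (s : S) : ℝ :=
  ∑ y, (p (s, y) / (∑ y', p (s, y'))) *
    Real.log ((p (s, y) / (∑ s', p (s', y))) / (∑ y', p (s, y')))

/-- `SI_min(S;Y,Z) = ∑_s P(s) min {I(S=s;Y), I(S=s;Z)}`. -/
noncomputable def SImin {S Y Z : Type} [Fintype S] [Fintype Y] [Fintype Z]
    (p : S × Y × Z → ℝ) : ℝ :=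
  ∑ s, (∑ y, ∑ z, p (s, y, z)) *
    min (specInfo (margSY p) s) (specInfo (margSZ p) s)


private lemma SImin_term_split (a b P1 P2 C1 C2 : ℝ) (ha : 0 ≤ a) (hb : 0 ≤ b)
    (hP1 : 0 < P1) (hP2 : 0 < P2) (haC : a ≤ C1) (hbC : b ≤ C2) :
    (a * b / (P1 * P2)) * Real.log ((a * b / (C1 * C2)) / (P1 * P2))
      = (b / P2) * ((a / P1) * Real.log ((a / C1) / P1))
        + (a / P1) * ((b / P2) * Real.log ((b / C2) / P2)) := by
  rcases eq_or_lt_of_le ha with h | h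
  · simp [← h]
  rcases eq_or_lt_of_le hb with h' | h'
  · simp [← h']
  have hC1 : 0 < C1 := lt_of_lt_of_le h haC
  have hC2 : 0 < C2 := lt_of_lt_of_le h' hbC
  have harg : (a * b / (C1 * C2)) / (P1 * P2) = ((a / C1) / P1) * ((b / C2) / P2) := by
    field_simp
  rw [harg, Real.log_mul (by positivity) (by positivity)]
  ring

private lemma specInfo_mul {S1 Y1 S2 Y2 : Type} [Fintype S1] [Fintype Y1] [Fintype S2]
    [Fintype Y2] (q1 : S1 × Y1 → ℝ) (q2 : S2 × Y2 → ℝ)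
    (h1 : ∀ x, 0 ≤ q1 x) (h2 : ∀ x, 0 ≤ q2 x) (s1 : S1) (s2 : S2)
    (hP1 : 0 < ∑ y, q1 (s1, y)) (hP2 : 0 < ∑ y, q2 (s2, y)) :
    specInfo (fun x : (S1 × S2) × (Y1 × Y2) => q1 (x.1.1, x.2.1) * q2 (x.1.2, x.2.2)) (s1, s2)
      = specInfo q1 s1 + specInfo q2 s2 := by
  set P1 := ∑ y, q1 (s1, y) with hP1def
  set P2 := ∑ y, q2 (s2, y) with hP2def
  unfold specInfo
  simp only [Fintype.sum_prod_type]
  have hPP : ∀ y1 : Y1, ∀ y2 : Y2,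
      (∑ y1' : Y1, ∑ y2' : Y2, q1 (s1, y1') * q2 (s2, y2')) = P1 * P2 := by
    intro _ _
    rw [← Finset.sum_mul_sum]
  have hCC : ∀ y1 : Y1, ∀ y2 : Y2,
      (∑ s1' : S1, ∑ s2' : S2, q1 (s1', y1) * q2 (s2', y2))
        = (∑ s1' : S1, q1 (s1', y1)) * (∑ s2' : S2, q2 (s2', y2)) := by
    intro _ _
    rw [← Finset.sum_mul_sum]
  have key : ∀ y1 : Y1, ∀ y2 : Y2,
      (q1 (s1, y1) * q2 (s2, y2) / (∑ y1' : Y1, ∑ y2' : Y2, q1 (s1, y1') * q2 (s2, y2'))) *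
        Real.log ((q1 (s1, y1) * q2 (s2, y2) /
            (∑ s1' : S1, ∑ s2' : S2, q1 (s1', y1) * q2 (s2', y2))) /
          (∑ y1' : Y1, ∑ y2' : Y2, q1 (s1, y1') * q2 (s2, y2')))
      = (q2 (s2, y2) / P2) *
          ((q1 (s1, y1) / P1) * Real.log ((q1 (s1, y1) / (∑ s1' : S1, q1 (s1', y1))) / P1))
        + (q1 (s1, y1) / P1) *
          ((q2 (s2, y2) / P2) * Real.log ((q2 (s2, y2) / (∑ s2' : S2, q2 (s2', y2))) / P2)) := by
    intro y1 y2
    rw [hPP y1 y2, hCC y1 y2]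
    exact SImin_term_split _ _ _ _ _ _ (h1 _) (h2 _) hP1 hP2
      (Finset.single_le_sum (fun i _ => h1 (i, y1)) (Finset.mem_univ s1))
      (Finset.single_le_sum (fun i _ => h2 (i, y2)) (Finset.mem_univ s2))
  calc (∑ y1 : Y1, ∑ y2 : Y2, _) = ∑ y1 : Y1, ∑ y2 : Y2,
        ((q2 (s2, y2) / P2) *
          ((q1 (s1, y1) / P1) * Real.log ((q1 (s1, y1) / (∑ s1' : S1, q1 (s1', y1))) / P1))
        + (q1 (s1, y1) / P1) *
          ((q2 (s2, y2) / P2) * Real.log ((q2 (s2, y2) / (∑ s2' : S2, q2 (s2', y2))) / P2))) := by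
        exact Finset.sum_congr rfl fun y1 _ => Finset.sum_congr rfl fun y2 _ => key y1 y2
    _ = _ := by
        have hc1 : (∑ y : Y1, q1 (s1, y) / P1) = 1 := by
          rw [← Finset.sum_div, ← hP1def, div_self (ne_of_gt hP1)]
        have hc2 : (∑ y : Y2, q2 (s2, y) / P2) = 1 := by
          rw [← Finset.sum_div, ← hP2def, div_self (ne_of_gt hP2)]
        simp only [Finset.sum_add_distrib, ← Finset.sum_mul, ← Finset.mul_sum]
        rw [hc1, hc2]
        simp [Finset.sum_add_distrib, Finset.mul_sum, mul_comm]
        rw [← hP1def, ← hP2def]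

private lemma margSY_prodDist {S1 Y1 Z1 S2 Y2 Z2 : Type} [Fintype S1] [Fintype Y1]
    [Fintype Z1] [Fintype S2] [Fintype Y2] [Fintype Z2]
    (p1 : S1 × Y1 × Z1 → ℝ) (p2 : S2 × Y2 × Z2 → ℝ) :
    margSY (prodDist p1 p2)
      = fun x => margSY p1 (x.1.1, x.2.1) * margSY p2 (x.1.2, x.2.2) := by
  funext x
  simp only [margSY, prodDist, Fintype.sum_prod_type]
  rw [← Finset.sum_mul_sum]

private lemma margSZ_prodDist {S1 Y1 Z1 S2 Y2 Z2 : Type} [Fintype S1] [Fintype Y1]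
    [Fintype Z1] [Fintype S2] [Fintype Y2] [Fintype Z2]
    (p1 : S1 × Y1 × Z1 → ℝ) (p2 : S2 × Y2 × Z2 → ℝ) :
    margSZ (prodDist p1 p2)
      = fun x => margSZ p1 (x.1.1, x.2.1) * margSZ p2 (x.1.2, x.2.2) := by
  funext x
  simp only [margSZ, prodDist, Fintype.sum_prod_type]
  rw [← Finset.sum_mul_sum]

private lemma prodDist_weight {S1 Y1 Z1 S2 Y2 Z2 : Type} [Fintype S1] [Fintype Y1]
    [Fintype Z1] [Fintype S2] [Fintype Y2] [Fintype Z2]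
    (p1 : S1 × Y1 × Z1 → ℝ) (p2 : S2 × Y2 × Z2 → ℝ) (s1 : S1) (s2 : S2) :
    (∑ y : Y1 × Y2, ∑ z : Z1 × Z2, prodDist p1 p2 ((s1, s2), y, z))
      = (∑ y, ∑ z, p1 (s1, y, z)) * (∑ y, ∑ z, p2 (s2, y, z)) := by
  simp only [prodDist, Fintype.sum_prod_type]
  rw [Finset.sum_mul_sum]
  refine Finset.sum_congr rfl fun y1 _ => Finset.sum_congr rfl fun y2 _ => ?_
  rw [← Finset.sum_mul_sum]

set_option maxHeartbeats 1000000 in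
/-- `SI_min` is superadditive under independent combination. -/
theorem SImin_superadditive
    {S1 Y1 Z1 S2 Y2 Z2 : Type} [Fintype S1] [Fintype Y1] [Fintype Z1]
    [Fintype S2] [Fintype Y2] [Fintype Z2]
    (p1 : S1 × Y1 × Z1 → ℝ) (p2 : S2 × Y2 × Z2 → ℝ)
    (hp1 : IsProbDist p1) (hp2 : IsProbDist p2) :
    SImin p1 + SImin p2 ≤ SImin (prodDist p1 p2) := by
  obtain ⟨h1n, h1s⟩ := hp1
  obtain ⟨h2n, h2s⟩ := hp2
  have hP1nn : ∀ s, 0 ≤ ∑ y, ∑ z, p1 (s, y, z) := fun s =>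
    Finset.sum_nonneg fun _ _ => Finset.sum_nonneg fun _ _ => h1n _
  have hP2nn : ∀ s, 0 ≤ ∑ y, ∑ z, p2 (s, y, z) := fun s =>
    Finset.sum_nonneg fun _ _ => Finset.sum_nonneg fun _ _ => h2n _
  have hP1sum : (∑ s, ∑ y, ∑ z, p1 (s, y, z)) = 1 := by
    simpa [Fintype.sum_prod_type] using h1s
  have hP2sum : (∑ s, ∑ y, ∑ z, p2 (s, y, z)) = 1 := by
    simpa [Fintype.sum_prod_type] using h2s
  have hmZ1 : ∀ s, (∑ z, margSZ p1 (s, z)) = ∑ y, ∑ z, p1 (s, y, z) := by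
    intro s; simp only [margSZ]; rw [Finset.sum_comm]
  have hmZ2 : ∀ s, (∑ z, margSZ p2 (s, z)) = ∑ y, ∑ z, p2 (s, y, z) := by
    intro s; simp only [margSZ]; rw [Finset.sum_comm]
  have key : ∀ s1 : S1, ∀ s2 : S2,
      (∑ y, ∑ z, p1 (s1, y, z)) * (∑ y, ∑ z, p2 (s2, y, z)) *
        (min (specInfo (margSY p1) s1) (specInfo (margSZ p1) s1)
          + min (specInfo (margSY p2) s2) (specInfo (margSZ p2) s2))
      ≤ (∑ y : Y1 × Y2, ∑ z : Z1 × Z2, prodDist p1 p2 ((s1, s2), y, z)) *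
          min (specInfo (margSY (prodDist p1 p2)) (s1, s2))
            (specInfo (margSZ (prodDist p1 p2)) (s1, s2)) := by
    intro s1 s2
    rw [prodDist_weight]
    rcases eq_or_lt_of_le (hP1nn s1) with h | h
    · rw [← h]; simp
    rcases eq_or_lt_of_le (hP2nn s2) with h' | h'
    · rw [← h']; simp
    have eY : specInfo (margSY (prodDist p1 p2)) (s1, s2)
        = specInfo (margSY p1) s1 + specInfo (margSY p2) s2 := by
      rw [margSY_prodDist]
      exact specInfo_mul (margSY p1) (margSY p2)
        (fun x => Finset.sum_nonneg fun _ _ => h1n _)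
        (fun x => Finset.sum_nonneg fun _ _ => h2n _) s1 s2 h h'
    have eZ : specInfo (margSZ (prodDist p1 p2)) (s1, s2)
        = specInfo (margSZ p1) s1 + specInfo (margSZ p2) s2 := by
      rw [margSZ_prodDist]
      refine specInfo_mul (margSZ p1) (margSZ p2)
        (fun x => Finset.sum_nonneg fun _ _ => h1n _)
        (fun x => Finset.sum_nonneg fun _ _ => h2n _) s1 s2 ?_ ?_
      · rw [hmZ1]; exact h
      · rw [hmZ2]; exact h'
    rw [eY, eZ]
    refine mul_le_mul_of_nonneg_left ?_ (by positivity)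
    exact le_min (add_le_add (min_le_left _ _) (min_le_left _ _))
      (add_le_add (min_le_right _ _) (min_le_right _ _))
  have expand : SImin p1 + SImin p2
      = ∑ s1 : S1, ∑ s2 : S2,
          (∑ y, ∑ z, p1 (s1, y, z)) * (∑ y, ∑ z, p2 (s2, y, z)) *
            (min (specInfo (margSY p1) s1) (specInfo (margSZ p1) s1)
              + min (specInfo (margSY p2) s2) (specInfo (margSZ p2) s2)) := by
    unfold SImin
    have step : ∀ s1 : S1, ∀ s2 : S2,
        (∑ y, ∑ z, p1 (s1, y, z)) * (∑ y, ∑ z, p2 (s2, y, z)) *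
          (min (specInfo (margSY p1) s1) (specInfo (margSZ p1) s1)
            + min (specInfo (margSY p2) s2) (specInfo (margSZ p2) s2))
        = (∑ y, ∑ z, p2 (s2, y, z)) *
            ((∑ y, ∑ z, p1 (s1, y, z)) *
              min (specInfo (margSY p1) s1) (specInfo (margSZ p1) s1))
          + (∑ y, ∑ z, p1 (s1, y, z)) *
            ((∑ y, ∑ z, p2 (s2, y, z)) *
              min (specInfo (margSY p2) s2) (specInfo (margSZ p2) s2)) := by
      intro s1 s2; ring
    simp only [step, Finset.sum_add_distrib, ← Finset.sum_mul, ← Finset.mul_sum,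
      hP1sum, hP2sum, one_mul, mul_one]
  rw [expand]
  unfold SImin
  rw [Fintype.sum_prod_type]
  exact Finset.sum_le_sum fun s1 _ => Finset.sum_le_sum fun s2 _ => key s1 s2
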